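/- Let (z_k)_{k≥0} be a sequence in a Euclidean space, (E_k)_{k≥1} a nonincreasing sequence of nonnegative reals with E_k → 0, (g_k)_{k≥1} nonnegative reals, a, b > 0, τ > 0, k₁ ≥ 1, and φ : [0,τ) → [0,∞) continuous and concave with φ(0) = 0, continuously differentiable on (0,τ) with φ' > 0 on (0,τ). Suppose: (i) E_k − E_{k+1} ≥ a‖z_{k+1} − z_k‖² for all k ≥ 1; (ii) g_k ≤ b‖z_k − z_{k−1}‖ for all k ≥ 1; (iii) E_{k₁} < τ and for all k ≥ k₁ with E_k > 0, φ'(E_k)·g_k ≥ 1. Then (z_k) converges to some limit z*, and there exists a constant C > 0 such that for all k ≥ k₁, ‖z_k − z*‖ ≤ C · max{ φ(E_k), √(E_{k−1}) }. -/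

import Mathlib

private lemma stmt13_amgm {x y D : ℝ} (hx : 0 ≤ x) (hy : 0 ≤ y) (h : D^2 ≤ x*y) :
    2 * D ≤ x + y := by nlinarith [sq_nonneg (x - y), sq_nonneg (x + y), sq_nonneg D]

private lemma stmt13_grad {φ dφ : ℝ → ℝ} {τ : ℝ} (hφconc : ConcaveOn ℝ (Set.Ico 0 τ) φ)
    (hφderiv : ∀ s ∈ Set.Ioo (0:ℝ) τ, HasDerivAt φ (dφ s) s)
    {u v : ℝ} (hu : 0 ≤ u) (huv : u < v) (hv : v < τ) :
    dφ v * (v - u) ≤ φ v - φ u := by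
  have hvm : v ∈ Set.Ioo (0:ℝ) τ := ⟨lt_of_le_of_lt hu huv, hv⟩
  have h := hφconc.le_slope_of_hasDerivAt ⟨hu, huv.trans hv⟩ ⟨(hu.trans_lt huv).le, hv⟩ huv
      (hφderiv v hvm)
  rw [slope_def_field] at h
  exact (le_div_iff₀ (by linarith)).mp h

set_option maxHeartbeats 2000000 in
/-- Pointwise convergence-rate estimate under the KŁ mechanism: the sequence
`(z_k)` converges to some `z*` and `‖z_k − z*‖ ≤ C·max{φ(E_k), √(E_{k−1})}`
for all `k ≥ k₁`. -/
theorem stmt_13 (d : ℕ) (z : ℕ → EuclideanSpace ℝ (Fin d))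
    (E g : ℕ → ℝ) (a b τ : ℝ) (k₁ : ℕ)
    (ha : 0 < a) (hb : 0 < b) (hτ : 0 < τ) (hk₁ : 1 ≤ k₁)
    (hEnonneg : ∀ k ≥ 1, 0 ≤ E k)
    (hEmono : ∀ k ≥ 1, E (k + 1) ≤ E k)
    (hEto0 : Filter.Tendsto E Filter.atTop (nhds 0))
    (hgnonneg : ∀ k ≥ 1, 0 ≤ g k)
    (φ dφ : ℝ → ℝ)
    (hφcont : ContinuousOn φ (Set.Ico 0 τ))
    (hφ0 : φ 0 = 0)
    (hφnonneg : ∀ s ∈ Set.Ico (0 : ℝ) τ, 0 ≤ φ s)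
    (hφconc : ConcaveOn ℝ (Set.Ico 0 τ) φ)
    (hφderiv : ∀ s ∈ Set.Ioo (0 : ℝ) τ, HasDerivAt φ (dφ s) s)
    (hdφcont : ContinuousOn dφ (Set.Ioo 0 τ))
    (hdφpos : ∀ s ∈ Set.Ioo (0 : ℝ) τ, 0 < dφ s)
    (hsuffdec : ∀ k ≥ 1, a * ‖z (k + 1) - z k‖ ^ 2 ≤ E k - E (k + 1))
    (hgbound : ∀ k ≥ 1, g k ≤ b * ‖z k - z (k - 1)‖)
    (hEk₁ : E k₁ < τ)
    (hKL : ∀ k ≥ k₁, 0 < E k → 1 ≤ dφ (E k) * g k) :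
    ∃ zs : EuclideanSpace ℝ (Fin d),
      Filter.Tendsto z Filter.atTop (nhds zs) ∧
      ∃ C : ℝ, 0 < C ∧ ∀ k ≥ k₁,
        ‖z k - zs‖ ≤ C * max (φ (E k)) (Real.sqrt (E (k - 1))) := by
  set D : ℕ → ℝ := fun k => ‖z (k+1) - z k‖ with hDdef
  have hDnn : ∀ k, 0 ≤ D k := fun k => norm_nonneg _
  -- monotonicity of E from index 1
  have hEmono' : ∀ m, 1 ≤ m → ∀ n, m ≤ n → E n ≤ E m := by
    intro m hm n hn
    induction n, hn using Nat.le_induction with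
    | base => exact le_refl _
    | succ n hn ih => exact (hEmono n (hm.trans hn)).trans ih
  have hElt : ∀ k, k₁ ≤ k → E k < τ :=
    fun k hk => lt_of_le_of_lt (hEmono' k₁ hk₁ k hk) hEk₁
  have hEnn : ∀ k, k₁ ≤ k → 0 ≤ E k := fun k hk => hEnonneg k (hk₁.trans hk)
  have hφEnn : ∀ k, k₁ ≤ k → 0 ≤ φ (E k) := fun k hk => hφnonneg _ ⟨hEnn k hk, hElt k hk⟩
  -- key per-step inequality
  have hstep : ∀ j, k₁ ≤ j → 2 * D j ≤ D (j-1) + (b/a) * (φ (E j) - φ (E (j+1))) := by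
    intro j hj
    have hj1 : 1 ≤ j := hk₁.trans hj
    have hdec := hsuffdec j hj1
    have hEj_lt := hElt j hj
    have hEj_nn := hEnn j hj
    have hEj1_nn : 0 ≤ E (j+1) := hEnonneg (j+1) (by omega)
    have hEstep : E (j+1) ≤ E j := hEmono j hj1
    by_cases hpos : 0 < E j
    · have hKLj := hKL j hj hpos
      have hgb := hgbound j hj1
      have hj11 : j - 1 + 1 = j := by omega
      have hDj1 : ‖z j - z (j-1)‖ = D (j-1) := by rw [hDdef]; simp [hj11]
      have hdφ : 0 < dφ (E j) := hdφpos _ ⟨hpos, hEj_lt⟩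
      have hB : 1 ≤ dφ (E j) * (b * D (j-1)) := by
        refine hKLj.trans (mul_le_mul_of_nonneg_left ?_ hdφ.le)
        rw [← hDj1]; exact hgb
      have hφd : dφ (E j) * (E j - E (j+1)) ≤ φ (E j) - φ (E (j+1)) := by
        rcases lt_or_eq_of_le hEstep with h | h
        · exact stmt13_grad hφconc hφderiv hEj1_nn h hEj_lt
        · rw [h]; simp
      have hA : dφ (E j) * (a * D j ^ 2) ≤ φ (E j) - φ (E (j+1)) :=
        (mul_le_mul_of_nonneg_left hdec hdφ.le).trans hφd
      have hX0 : 0 ≤ φ (E j) - φ (E (j+1)) :=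
        le_trans (mul_nonneg hdφ.le (by positivity)) hA
      have hx0 : 0 ≤ a * D j ^ 2 := by positivity
      have hbd0 : 0 ≤ b * D (j-1) := mul_nonneg hb.le (hDnn _)
      have h1 : a * D j ^ 2 ≤ (dφ (E j) * (a * D j ^ 2)) * (b * D (j-1)) := by
        calc a * D j ^ 2 = (a * D j ^ 2) * 1 := by ring
          _ ≤ (a * D j ^ 2) * (dφ (E j) * (b * D (j-1))) := mul_le_mul_of_nonneg_left hB hx0
          _ = (dφ (E j) * (a * D j ^ 2)) * (b * D (j-1)) := by ring
      have h2 : a * D j ^ 2 ≤ (φ (E j) - φ (E (j+1))) * (b * D (j-1)) :=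
        h1.trans (mul_le_mul_of_nonneg_right hA hbd0)
      have hsq : D j ^ 2 ≤ D (j-1) * ((b/a) * (φ (E j) - φ (E (j+1)))) := by
        have heq : D (j-1) * ((b/a) * (φ (E j) - φ (E (j+1))))
            = ((φ (E j) - φ (E (j+1))) * (b * D (j-1))) / a := by ring
        rw [heq, le_div_iff₀ ha]; linarith
      exact stmt13_amgm (hDnn (j-1)) (mul_nonneg (by positivity) hX0) hsq
    · have hEj0 : E j = 0 := le_antisymm (not_lt.mp hpos) hEj_nn
      have hEj10 : E (j+1) = 0 := le_antisymm (hEj0 ▸ hEstep) hEj1_nn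
      have hDj0 : D j = 0 := by
        have h2 : D j ^ 2 ≤ 0 := by nlinarith [hdec]
        nlinarith [sq_nonneg (D j), hDnn j]
      rw [hEj0, hEj10, hDj0]
      have := hDnn (j-1); simp; nlinarith
  -- summed inequality
  have hkey : ∀ k, k₁ ≤ k → ∀ N, k ≤ N →
      (∑ j ∈ Finset.Ico k N, D j) + D (N-1) ≤ D (k-1) + (b/a) * (φ (E k) - φ (E N)) := by
    intro k hk N hN
    induction N, hN using Nat.le_induction with
    | base => simp
    | succ N hN ih =>
      have hN1 : N + 1 - 1 = N := by omega
      rw [Finset.sum_Ico_succ_top hN, hN1]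
      have hstepN := hstep N (hk.trans hN)
      have hNm : N - 1 + 1 - 1 = N - 1 := by omega
      nlinarith [ih, hstepN]
  have hsum : ∀ k, k₁ ≤ k → ∀ N, (∑ j ∈ Finset.Ico k N, D j) ≤ D (k-1) + (b/a) * φ (E k) := by
    intro k hk N
    rcases le_or_gt k N with h | h
    · have h1 := hkey k hk N h
      have h2 : 0 ≤ (b/a) * φ (E N) := mul_nonneg (by positivity) (hφEnn N (hk.trans h))
      have := hDnn (N-1)
      nlinarith
    · rw [Finset.Ico_eq_empty (by omega)]
      simp only [Finset.sum_empty]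
      exact add_nonneg (hDnn _) (mul_nonneg (by positivity) (hφEnn k hk))
  -- summability and convergence
  have hDsum : Summable D := by
    apply summable_of_sum_range_le hDnn
      (c := (∑ j ∈ Finset.range k₁, D j) + (D (k₁-1) + (b/a) * φ (E k₁)))
    intro n
    rcases le_or_gt k₁ n with h | h
    · rw [Finset.range_eq_Ico, ← Finset.sum_Ico_consecutive _ (Nat.zero_le k₁) h]
      have := hsum k₁ le_rfl n
      rw [← Finset.range_eq_Ico]; linarith
    · have h1 : ∑ j ∈ Finset.range n, D j ≤ ∑ j ∈ Finset.range k₁, D j :=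
        Finset.sum_le_sum_of_subset_of_nonneg (Finset.range_subset_range.2 h.le)
          (fun i _ _ => hDnn i)
      have h2 : 0 ≤ D (k₁-1) + (b/a) * φ (E k₁) :=
        add_nonneg (hDnn _) (mul_nonneg (by positivity) (hφEnn k₁ le_rfl))
      linarith
  have hcauchy : CauchySeq z := by
    apply cauchySeq_of_summable_dist
    have : (fun n => dist (z n) (z (n+1))) = D := by
      funext n; rw [hDdef]; simp [dist_eq_norm, norm_sub_rev]
    rw [this]; exact hDsum
  obtain ⟨zs, hzs⟩ := cauchySeq_tendsto_of_complete hcauchy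
  -- the distance-to-limit bound
  have hnorm : ∀ k, k₁ ≤ k → ‖z k - zs‖ ≤ D (k-1) + (b/a) * φ (E k) := by
    intro k hk
    have hlim : Filter.Tendsto (fun N => ‖z k - z N‖) Filter.atTop (nhds ‖z k - zs‖) :=
      (Filter.Tendsto.sub tendsto_const_nhds hzs).norm
    refine le_of_tendsto hlim ?_
    filter_upwards [Filter.eventually_ge_atTop k] with N hN
    calc ‖z k - z N‖ = dist (z k) (z N) := (dist_eq_norm _ _).symm
      _ ≤ ∑ j ∈ Finset.Ico k N, dist (z j) (z (j+1)) := dist_le_Ico_sum_dist z hN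
      _ = ∑ j ∈ Finset.Ico k N, D j := by
          refine Finset.sum_congr rfl fun j _ => ?_
          rw [hDdef]; simp [dist_eq_norm, norm_sub_rev]
      _ ≤ D (k-1) + (b/a) * φ (E k) := hsum k hk N
  -- the constant
  set C₀ : ℝ := (Real.sqrt a)⁻¹ + b/a with hC₀def
  have hC₀pos : 0 < C₀ := by
    have : 0 < Real.sqrt a := Real.sqrt_pos.mpr ha
    positivity
  set ex : ℝ := if 0 < E 1 then max 0 ((D 0 + (b/a) * φ (E 1)) / φ (E 1)) else 0 with hexdef
  have hexnn : 0 ≤ ex := by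
    rw [hexdef]; split
    · exact le_max_left _ _
    · exact le_refl _
  refine ⟨zs, hzs, C₀ + ex, by linarith, ?_⟩
  intro k hk
  have hk1 : 1 ≤ k := hk₁.trans hk
  set M : ℝ := max (φ (E k)) (Real.sqrt (E (k-1))) with hMdef
  have hM0 : 0 ≤ M := le_trans (Real.sqrt_nonneg _) (le_max_right _ _)
  have hφEkM : φ (E k) ≤ M := le_max_left _ _
  rcases lt_or_ge 1 k with hk2 | hk2
  · -- k ≥ 2
    have hkm1 : 1 ≤ k - 1 := by omega
    have hkm11 : k - 1 + 1 = k := by omega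
    have hE' := hsuffdec (k-1) hkm1
    rw [hkm11] at hE'
    have hEkm1nn : 0 ≤ E (k-1) := hEnonneg (k-1) hkm1
    have hEknn : 0 ≤ E k := hEnonneg k hk1
    have hDsqb : D (k-1) ^ 2 ≤ E (k-1) / a := by
      have hDeq : D (k-1) = ‖z k - z (k-1)‖ := by rw [hDdef]; simp [hkm11]
      rw [hDeq, le_div_iff₀ ha]
      nlinarith
    have hDk1 : D (k-1) ≤ Real.sqrt (E (k-1)) * (Real.sqrt a)⁻¹ := by
      have h1 : D (k-1) ≤ Real.sqrt (E (k-1) / a) := by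
        rw [← Real.sqrt_sq (hDnn (k-1))]
        exact Real.sqrt_le_sqrt hDsqb
      rwa [Real.sqrt_div hEkm1nn, div_eq_mul_inv] at h1
    calc ‖z k - zs‖ ≤ D (k-1) + (b/a) * φ (E k) := hnorm k hk
      _ ≤ Real.sqrt (E (k-1)) * (Real.sqrt a)⁻¹ + (b/a) * φ (E k) := by linarith
      _ ≤ M * (Real.sqrt a)⁻¹ + (b/a) * M := by
          have h1 : Real.sqrt (E (k-1)) ≤ M := le_max_right _ _
          have h2 : (0:ℝ) ≤ (Real.sqrt a)⁻¹ := by positivity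
          have h3 : (0:ℝ) ≤ b/a := by positivity
          nlinarith
      _ = C₀ * M := by rw [hC₀def]; ring
      _ ≤ (C₀ + ex) * M := by nlinarith
  · -- k = 1, hence k₁ = 1
    have hkeq : k = 1 := by omega
    subst hkeq
    have hk₁1 : k₁ = 1 := by omega
    rcases lt_or_ge 0 (E 1) with hE1 | hE1
    · -- positive case
      have hE1lt : E 1 < τ := hElt 1 hk
      have hφ1pos : 0 < φ (E 1) := by
        have := stmt13_grad hφconc hφderiv (le_refl (0:ℝ)) hE1 hE1lt
        rw [hφ0] at this
        have hd := hdφpos (E 1) ⟨hE1, hE1lt⟩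
        nlinarith
      have hbound := hnorm 1 hk
      have hexval : ex = max 0 ((D 0 + (b/a) * φ (E 1)) / φ (E 1)) := by
        rw [hexdef, if_pos hE1]
      have h1 : D 0 + (b/a) * φ (E 1) ≤ ex * φ (E 1) := by
        rw [hexval]
        have h2 : (D 0 + (b/a) * φ (E 1)) / φ (E 1) * φ (E 1) = D 0 + (b/a) * φ (E 1) :=
          div_mul_cancel₀ _ (ne_of_gt hφ1pos)
        calc D 0 + (b/a) * φ (E 1)
            = (D 0 + (b/a) * φ (E 1)) / φ (E 1) * φ (E 1) := h2.symm
          _ ≤ max 0 ((D 0 + (b/a) * φ (E 1)) / φ (E 1)) * φ (E 1) :=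
              mul_le_mul_of_nonneg_right (le_max_right _ _) hφ1pos.le
      have h3 : ex * φ (E 1) ≤ (C₀ + ex) * M := by
        have h4 : ex * φ (E 1) ≤ ex * M := mul_le_mul_of_nonneg_left hφEkM hexnn
        nlinarith
      have hD0eq : D (1-1) = D 0 := by norm_num
      rw [hD0eq] at hbound
      linarith
    · -- E 1 = 0 : the sequence is eventually constant
      have hE10 : E 1 = 0 := le_antisymm hE1 (hEnonneg 1 le_rfl)
      have hEall : ∀ j, 1 ≤ j → E j = 0 := fun j hj =>
        le_antisymm (hE10 ▸ hEmono' 1 le_rfl j hj) (hEnonneg j hj)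
      have hDall : ∀ j, 1 ≤ j → D j = 0 := by
        intro j hj
        have hd := hsuffdec j hj
        rw [hEall j hj, hEall (j+1) (by omega)] at hd
        have : D j ^ 2 ≤ 0 := by nlinarith
        nlinarith [hDnn j, sq_nonneg (D j)]
      have hz10 : ‖z 1 - zs‖ ≤ 0 := by
        have hlim : Filter.Tendsto (fun N => ‖z 1 - z N‖) Filter.atTop (nhds ‖z 1 - zs‖) :=
          (Filter.Tendsto.sub tendsto_const_nhds hzs).norm
        refine le_of_tendsto hlim ?_
        filter_upwards [Filter.eventually_ge_atTop 1] with N hN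
        calc ‖z 1 - z N‖ = dist (z 1) (z N) := (dist_eq_norm _ _).symm
          _ ≤ ∑ j ∈ Finset.Ico 1 N, dist (z j) (z (j+1)) := dist_le_Ico_sum_dist z hN
          _ = 0 := by
              refine Finset.sum_eq_zero fun j hj => ?_
              have hj1 : 1 ≤ j := (Finset.mem_Ico.mp hj).1
              have := hDall j hj1
              rw [hDdef] at this
              simpa [dist_eq_norm, norm_sub_rev] using this
      have : 0 ≤ (C₀ + ex) * M := mul_nonneg (by linarith) hM0
      linarith [norm_nonneg (z 1 - zs), hz10]
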